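/- For jointly distributed discrete random variables X, J1, E^n where J1–X^n–E^n is a Markov chain and (X_i,E_i) are i.i.d., the following decomposition holds: H(X^n|J1) − I(X^n;E^n) + I(J1;E^n) ≤ Σ_{i=1}^n [ H(X_i|J1,X^{i-1}) − I(X_i;E_i|J1,X^{i-1}) ], where the inequality uses I(J1,X^{i-1},E^{i-1};E_i) ≥ I(J1,E^{i-1};E_i) and the Markov chain E_i–X_i–(J1,X^{i-1})–E^{i-1}. -/

import Mathlib

open Real Finset

/-- Probability that the random variable `X` takes value `a`, under pmf `p` on `Ω`. -/
noncomputable def distOf {Ω A : Type*} [Fintype Ω] [DecidableEq A] (p : Ω → ℝ) (X : Ω → A)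
    (a : A) : ℝ :=
  ∑ ω ∈ Finset.univ.filter (fun ω => X ω = a), p ω

/-- Shannon entropy (natural log) of a discrete random variable. -/
noncomputable def Hd {Ω A : Type*} [Fintype Ω] [Fintype A] [DecidableEq A]
    (p : Ω → ℝ) (X : Ω → A) : ℝ :=
  -∑ a : A, distOf p X a * Real.log (distOf p X a)

/-- Conditional entropy H(X|Y). -/
noncomputable def CHd {Ω A B : Type*} [Fintype Ω] [Fintype A] [DecidableEq A]
    [Fintype B] [DecidableEq B] (p : Ω → ℝ) (X : Ω → A) (Y : Ω → B) : ℝ :=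
  Hd p (fun ω => (X ω, Y ω)) - Hd p Y

/-- Mutual information I(X;Y). -/
noncomputable def MId {Ω A B : Type*} [Fintype Ω] [Fintype A] [DecidableEq A]
    [Fintype B] [DecidableEq B] (p : Ω → ℝ) (X : Ω → A) (Y : Ω → B) : ℝ :=
  Hd p X + Hd p Y - Hd p (fun ω => (X ω, Y ω))

/-- Conditional mutual information I(X;Y|Z). -/
noncomputable def CMId {Ω A B C : Type*} [Fintype Ω] [Fintype A] [DecidableEq A]
    [Fintype B] [DecidableEq B] [Fintype C] [DecidableEq C]
    (p : Ω → ℝ) (X : Ω → A) (Y : Ω → B) (Z : Ω → C) : ℝ :=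
  Hd p (fun ω => (X ω, Z ω)) + Hd p (fun ω => (Y ω, Z ω))
    - Hd p (fun ω => (X ω, Y ω, Z ω)) - Hd p Z

section
variable {Ω A B C : Type*} [Fintype Ω] {p : Ω → ℝ}

lemma distOf_nonneg (hp : ∀ ω, 0 ≤ p ω) [DecidableEq A] (X : Ω → A) (a : A) :
    0 ≤ distOf p X a :=
  Finset.sum_nonneg fun ω _ => hp ω

lemma distOf_eq_sum_ite [DecidableEq A] (X : Ω → A) (a : A) :
    distOf p X a = ∑ ω, if X ω = a then p ω else 0 := by
  rw [distOf, Finset.sum_filter]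

lemma sum_distOf [Fintype A] [DecidableEq A] (X : Ω → A) :
    ∑ a, distOf p X a = ∑ ω, p ω := by
  simp only [distOf_eq_sum_ite]
  rw [Finset.sum_comm]
  refine Finset.sum_congr rfl fun ω _ => ?_
  simp

lemma Hd_comp [Fintype A] [DecidableEq A] [Fintype B] [DecidableEq B]
    (g : A → B) (hg : Function.Injective g) (X : Ω → A) :
    Hd p (fun ω => g (X ω)) = Hd p X := by
  have hzero : ∀ b ∉ Finset.univ.image g, distOf p (fun ω => g (X ω)) b = 0 := by
    intro b hb
    rw [distOf]
    apply Finset.sum_eq_zero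
    intro ω hω
    simp only [Finset.mem_filter] at hω
    exact absurd (hω.2 ▸ Finset.mem_image_of_mem g (Finset.mem_univ _)) hb
  have hval : ∀ a : A, distOf p (fun ω => g (X ω)) (g a) = distOf p X a := by
    intro a
    rw [distOf, distOf]
    congr 1
    ext ω
    simp [hg.eq_iff]
  rw [Hd, Hd]
  congr 1
  rw [← Finset.sum_subset (Finset.subset_univ (Finset.univ.image g))]
  · rw [Finset.sum_image (fun a _ a' _ h => hg h)]
    exact Finset.sum_congr rfl fun a _ => by rw [hval]
  · intro b _ hb
    rw [hzero b hb]
    simp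

variable [Fintype A] [DecidableEq A] [Fintype B] [DecidableEq B] [Fintype C] [DecidableEq C]

lemma marg_XZ (X : Ω → A) (Y : Ω → B) (Z : Ω → C) (x : A) (z : C) :
    distOf p (fun ω => (X ω, Z ω)) (x, z)
      = ∑ y, distOf p (fun ω => (X ω, Y ω, Z ω)) (x, y, z) := by
  simp only [distOf_eq_sum_ite]
  rw [Finset.sum_comm]
  refine Finset.sum_congr rfl fun ω _ => ?_
  simp only [Prod.mk.injEq]
  by_cases h1 : X ω = x <;> by_cases h2 : Z ω = z <;>
    simp [h1, h2, ite_and, Finset.sum_ite_eq]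

lemma marg_YZ (X : Ω → A) (Y : Ω → B) (Z : Ω → C) (y : B) (z : C) :
    distOf p (fun ω => (Y ω, Z ω)) (y, z)
      = ∑ x, distOf p (fun ω => (X ω, Y ω, Z ω)) (x, y, z) := by
  simp only [distOf_eq_sum_ite]
  rw [Finset.sum_comm]
  refine Finset.sum_congr rfl fun ω _ => ?_
  simp only [Prod.mk.injEq]
  by_cases h1 : Y ω = y <;> by_cases h2 : Z ω = z <;>
    simp [h1, h2, ite_and, Finset.sum_ite_eq]

lemma marg_Z (X : Ω → A) (Y : Ω → B) (Z : Ω → C) (z : C) :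
    distOf p Z z = ∑ x, ∑ y, distOf p (fun ω => (X ω, Y ω, Z ω)) (x, y, z) := by
  simp only [distOf_eq_sum_ite]
  rw [show (∑ x, ∑ y, ∑ ω, if (X ω, Y ω, Z ω) = (x, y, z) then p ω else 0)
      = ∑ ω, ∑ x, ∑ y, (if (X ω, Y ω, Z ω) = (x, y, z) then p ω else 0) from
    (Finset.sum_congr rfl fun x _ => Finset.sum_comm).trans Finset.sum_comm]
  refine Finset.sum_congr rfl fun ω _ => ?_
  simp only [Prod.mk.injEq]
  by_cases h : Z ω = z <;> simp [h, ite_and, Finset.sum_ite_eq]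

end

lemma key_ineq (c a b d : ℝ) (hc : 0 ≤ c) (hca : c ≤ a) (hcb : c ≤ b) (hcd : c ≤ d)
    (hd0 : 0 ≤ d) :
    c - (if 0 < d then a * b / d else 0)
      ≤ c * Real.log c + c * Real.log d - c * Real.log a - c * Real.log b := by
  rcases eq_or_lt_of_le hc with h | h
  · simp only [← h, zero_mul, add_zero, sub_zero, zero_sub, neg_nonpos, zero_add]
    split
    · have ha : 0 ≤ a := le_trans hc hca
      have hb : 0 ≤ b := le_trans hc hcb
      positivity
    · linarith
  · have ha' : 0 < a := lt_of_lt_of_le h hca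
    have hb' : 0 < b := lt_of_lt_of_le h hcb
    have hd' : 0 < d := lt_of_lt_of_le h hcd
    rw [if_pos hd']
    have hlog : Real.log (a * b / (c * d)) ≤ a * b / (c * d) - 1 :=
      Real.log_le_sub_one_of_pos (by positivity)
    have hexp : Real.log (a * b / (c * d))
        = Real.log a + Real.log b - Real.log c - Real.log d := by
      rw [Real.log_div (by positivity) (by positivity), Real.log_mul (by positivity)
        (by positivity), Real.log_mul (by positivity) (by positivity)]
      ring
    have hmul : c * Real.log (a * b / (c * d)) ≤ c * (a * b / (c * d) - 1) :=
      mul_le_mul_of_nonneg_left hlog hc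
    have hval : c * (a * b / (c * d) - 1) = a * b / d - c := by
      field_simp
    rw [hexp] at hmul
    rw [hval] at hmul
    nlinarith [hmul]

lemma sum3_nonneg {A B C : Type*} [Fintype A] [Fintype B] [Fintype C]
    (c : A → B → C → ℝ) (a : A → C → ℝ) (b : B → C → ℝ) (d : C → ℝ)
    (hc : ∀ x y z, 0 ≤ c x y z)
    (ha : ∀ x z, a x z = ∑ y, c x y z)
    (hb : ∀ y z, b y z = ∑ x, c x y z)
    (hd : ∀ z, d z = ∑ x, ∑ y, c x y z)
    (hsum : ∑ z, d z = 1) :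
    0 ≤ (∑ x, ∑ y, ∑ z, c x y z * Real.log (c x y z))
      + (∑ x, ∑ y, ∑ z, c x y z * Real.log (d z))
      - (∑ x, ∑ y, ∑ z, c x y z * Real.log (a x z))
      - (∑ x, ∑ y, ∑ z, c x y z * Real.log (b y z)) := by
  have hsa : ∀ z, ∑ x, a x z = d z := by
    intro z; rw [hd]; exact Finset.sum_congr rfl fun x _ => ha x z
  have hsb : ∀ z, ∑ y, b y z = d z := by
    intro z; rw [hd, Finset.sum_comm]
    exact Finset.sum_congr rfl fun y _ => hb y z
  have hswap : ∀ f : A → B → C → ℝ,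
      (∑ x, ∑ y, ∑ z, f x y z) = ∑ z, ∑ x, ∑ y, f x y z := fun f =>
    (Finset.sum_congr rfl fun x _ => Finset.sum_comm).trans Finset.sum_comm
  have hctot : ∑ x, ∑ y, ∑ z, c x y z = 1 := by
    rw [hswap, ← hsum]
    exact Finset.sum_congr rfl fun z _ => (hd z).symm
  have hterm : ∀ x y z,
      c x y z - (if 0 < d z then a x z * b y z / d z else 0)
        ≤ c x y z * Real.log (c x y z) + c x y z * Real.log (d z)
          - c x y z * Real.log (a x z) - c x y z * Real.log (b y z) := by
    intro x y z
    apply key_ineq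
    · exact hc x y z
    · rw [ha]; exact Finset.single_le_sum (fun y' _ => hc x y' z) (Finset.mem_univ y)
    · rw [hb]; exact Finset.single_le_sum (fun x' _ => hc x' y z) (Finset.mem_univ x)
    · rw [hd]
      calc c x y z ≤ ∑ y', c x y' z :=
            Finset.single_le_sum (fun y' _ => hc x y' z) (Finset.mem_univ y)
        _ ≤ ∑ x', ∑ y', c x' y' z :=
            Finset.single_le_sum (fun x' _ => Finset.sum_nonneg fun y' _ => hc x' y' z)
              (Finset.mem_univ x)
    · rw [hd]; exact Finset.sum_nonneg fun x' _ => Finset.sum_nonneg fun y' _ => hc x' y' z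
  have hd0 : ∀ z, 0 ≤ d z := fun z => by
    rw [hd]; exact Finset.sum_nonneg fun x' _ => Finset.sum_nonneg fun y' _ => hc x' y' z
  have hite : ∀ z, (∑ x, ∑ y, (if 0 < d z then a x z * b y z / d z else 0)) = d z := by
    intro z
    by_cases hz : 0 < d z
    · simp only [if_pos hz]
      have : ∀ x, ∑ y, a x z * b y z / d z = a x z := by
        intro x
        rw [← Finset.sum_div, ← Finset.mul_sum, mul_div_assoc,
          hsb z, div_self (ne_of_gt hz), mul_one]
      rw [Finset.sum_congr rfl fun x _ => this x, hsa]
    · simp only [if_neg hz]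
      have : d z = 0 := le_antisymm (not_lt.mp hz) (hd0 z)
      simp [this]
  calc (0:ℝ) = (∑ x, ∑ y, ∑ z, c x y z)
        - ∑ x, ∑ y, ∑ z, (if 0 < d z then a x z * b y z / d z else 0) := by
        rw [hctot]
        rw [hswap fun x y z => (if 0 < d z then a x z * b y z / d z else 0)]
        rw [Finset.sum_congr rfl fun z _ => hite z, hsum]
        ring
    _ = ∑ x, ∑ y, ∑ z,
          (c x y z - (if 0 < d z then a x z * b y z / d z else 0)) := by
        simp only [Finset.sum_sub_distrib]
    _ ≤ ∑ x, ∑ y, ∑ z,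
          (c x y z * Real.log (c x y z) + c x y z * Real.log (d z)
            - c x y z * Real.log (a x z) - c x y z * Real.log (b y z)) := by
        refine Finset.sum_le_sum fun x _ => Finset.sum_le_sum fun y _ =>
          Finset.sum_le_sum fun z _ => hterm x y z
    _ = _ := by simp only [Finset.sum_add_distrib, Finset.sum_sub_distrib]

section
variable {Ω A B C : Type*} [Fintype Ω] {p : Ω → ℝ}
  [Fintype A] [DecidableEq A] [Fintype B] [DecidableEq B] [Fintype C] [DecidableEq C]

lemma CMId_nonneg (hp : ∀ ω, 0 ≤ p ω) (hp1 : ∑ ω, p ω = 1)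
    (X : Ω → A) (Y : Ω → B) (Z : Ω → C) : 0 ≤ CMId p X Y Z := by
  have hswapA : ∀ f : A → B → C → ℝ,
      (∑ x, ∑ z, ∑ y, f x y z) = ∑ x, ∑ y, ∑ z, f x y z := fun f =>
    Finset.sum_congr rfl fun x _ => Finset.sum_comm
  have hXYZ : Hd p (fun ω => (X ω, Y ω, Z ω))
      = -∑ x, ∑ y, ∑ z, distOf p (fun ω => (X ω, Y ω, Z ω)) (x, y, z)
          * Real.log (distOf p (fun ω => (X ω, Y ω, Z ω)) (x, y, z)) := by
    rw [Hd]
    simp only [Fintype.sum_prod_type]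
  have hXZ : Hd p (fun ω => (X ω, Z ω))
      = -∑ x, ∑ y, ∑ z, distOf p (fun ω => (X ω, Y ω, Z ω)) (x, y, z)
          * Real.log (distOf p (fun ω => (X ω, Z ω)) (x, z)) := by
    rw [Hd]
    simp only [Fintype.sum_prod_type]
    rw [← hswapA]
    congr 1
    refine Finset.sum_congr rfl fun x _ => Finset.sum_congr rfl fun z _ => ?_
    rw [← Finset.sum_mul, ← marg_XZ X Y Z x z]
  have hYZ : Hd p (fun ω => (Y ω, Z ω))
      = -∑ x, ∑ y, ∑ z, distOf p (fun ω => (X ω, Y ω, Z ω)) (x, y, z)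
          * Real.log (distOf p (fun ω => (Y ω, Z ω)) (y, z)) := by
    rw [Hd]
    simp only [Fintype.sum_prod_type]
    rw [show (∑ x, ∑ y, ∑ z, distOf p (fun ω => (X ω, Y ω, Z ω)) (x, y, z)
          * Real.log (distOf p (fun ω => (Y ω, Z ω)) (y, z)))
        = ∑ y, ∑ z, ∑ x, distOf p (fun ω => (X ω, Y ω, Z ω)) (x, y, z)
          * Real.log (distOf p (fun ω => (Y ω, Z ω)) (y, z)) from
      Finset.sum_comm.trans (Finset.sum_congr rfl fun y _ => Finset.sum_comm)]
    congr 1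
    refine Finset.sum_congr rfl fun y _ => Finset.sum_congr rfl fun z _ => ?_
    rw [← Finset.sum_mul, ← marg_YZ X Y Z y z]
  have hZ : Hd p Z
      = -∑ x, ∑ y, ∑ z, distOf p (fun ω => (X ω, Y ω, Z ω)) (x, y, z)
          * Real.log (distOf p Z z) := by
    rw [Hd]
    rw [show (∑ x, ∑ y, ∑ z, distOf p (fun ω => (X ω, Y ω, Z ω)) (x, y, z)
          * Real.log (distOf p Z z))
        = ∑ z, ∑ x, ∑ y, distOf p (fun ω => (X ω, Y ω, Z ω)) (x, y, z)
          * Real.log (distOf p Z z) from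
      (Finset.sum_congr rfl fun x _ => Finset.sum_comm).trans Finset.sum_comm]
    congr 1
    refine Finset.sum_congr rfl fun z _ => ?_
    rw [show (∑ x, ∑ y, distOf p (fun ω => (X ω, Y ω, Z ω)) (x, y, z)
          * Real.log (distOf p Z z))
        = (∑ x, ∑ y, distOf p (fun ω => (X ω, Y ω, Z ω)) (x, y, z))
          * Real.log (distOf p Z z) from by
      rw [Finset.sum_mul]
      exact Finset.sum_congr rfl fun x _ => (Finset.sum_mul ..).symm]
    rw [← marg_Z X Y Z z]
  have key := sum3_nonneg
    (fun x y z => distOf p (fun ω => (X ω, Y ω, Z ω)) (x, y, z))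
    (fun x z => distOf p (fun ω => (X ω, Z ω)) (x, z))
    (fun y z => distOf p (fun ω => (Y ω, Z ω)) (y, z))
    (fun z => distOf p Z z)
    (fun x y z => distOf_nonneg hp _ _)
    (fun x z => marg_XZ X Y Z x z)
    (fun y z => marg_YZ X Y Z y z)
    (fun z => marg_Z X Y Z z)
    (by rw [sum_distOf, hp1])
  rw [CMId, hXYZ, hXZ, hYZ, hZ]
  linarith [key]

lemma cond_mono (hp : ∀ ω, 0 ≤ p ω) (hp1 : ∑ ω, p ω = 1)
    (Av : Ω → A) (Bv : Ω → B) (g : B → C) :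
    Hd p (fun ω => (Av ω, Bv ω)) - Hd p Bv
      ≤ Hd p (fun ω => (Av ω, g (Bv ω))) - Hd p (fun ω => g (Bv ω)) := by
  have h := CMId_nonneg hp hp1 Av Bv (fun ω => g (Bv ω))
  rw [CMId] at h
  have e1 : Hd p (fun ω => (Bv ω, g (Bv ω))) = Hd p Bv :=
    Hd_comp (fun b => (b, g b)) (fun b b' hbb => congrArg Prod.fst hbb) Bv
  have e2 : Hd p (fun ω => (Av ω, Bv ω, g (Bv ω))) = Hd p (fun ω => (Av ω, Bv ω)) :=
    Hd_comp (fun t : A × B => (t.1, t.2, g t.2))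
      (fun t t' htt => by
        simp only [Prod.mk.injEq] at htt
        exact Prod.ext_iff.2 ⟨htt.1, htt.2.1⟩)
      (fun ω => (Av ω, Bv ω))
  rw [e1, e2] at h
  linarith

end

theorem stmt9 {Ω 𝒳 ℰ 𝒥 : Type*} [Fintype Ω]
    [Fintype 𝒳] [DecidableEq 𝒳] [Fintype ℰ] [DecidableEq ℰ] [Fintype 𝒥] [DecidableEq 𝒥]
    (n : ℕ)
    (p : Ω → ℝ) (hp : ∀ ω, 0 ≤ p ω) (hp1 : ∑ ω, p ω = 1)
    (Xs : Fin n → Ω → 𝒳) (Es : Fin n → Ω → ℰ) (J1 : Ω → 𝒥)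
    -- the pairs (X_i, E_i) are i.i.d. with common per-letter pmf q:
    (q : 𝒳 × ℰ → ℝ)
    (hiid : ∀ f : Fin n → 𝒳 × ℰ,
      distOf p (fun ω => fun i => (Xs i ω, Es i ω)) f = ∏ i, q (f i))
    -- Markov chain J1 - X^n - E^n:
    (hMarkov : CMId p J1 (fun ω => fun i => Es i ω) (fun ω => fun i => Xs i ω) = 0) :
    CHd p (fun ω => fun i => Xs i ω) J1
        - MId p (fun ω => fun i => Xs i ω) (fun ω => fun i => Es i ω)
        + MId p J1 (fun ω => fun i => Es i ω)
      ≤ ∑ i : Fin n,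
          (CHd p (Xs i)
              (fun ω => (J1 ω, fun j : Fin i.val => Xs ⟨j.val, j.isLt.trans i.isLt⟩ ω))
            - CMId p (Xs i) (Es i)
              (fun ω => (J1 ω, fun j : Fin i.val => Xs ⟨j.val, j.isLt.trans i.isLt⟩ ω))) := by
  have tele : ∀ k, (hk : k ≤ n) →
      Hd p (fun ω => (J1 ω, (fun i => Es i ω),
          fun j : Fin k => Xs ⟨j.val, lt_of_lt_of_le j.isLt hk⟩ ω))
        - Hd p (fun ω => (J1 ω, fun i => Es i ω))
      ≤ ∑ i ∈ Finset.univ.filter (fun i : Fin n => i.val < k),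
          (CHd p (Xs i)
              (fun ω => (J1 ω, fun j : Fin i.val => Xs ⟨j.val, j.isLt.trans i.isLt⟩ ω))
            - CMId p (Xs i) (Es i)
              (fun ω => (J1 ω, fun j : Fin i.val => Xs ⟨j.val, j.isLt.trans i.isLt⟩ ω))) := by
    intro k
    induction k with
    | zero =>
      intro hk
      have e : (fun ω => (J1 ω, (fun i => Es i ω),
            fun j : Fin 0 => Xs ⟨j.val, lt_of_lt_of_le j.isLt hk⟩ ω))
          = (fun ω => ((fun t : 𝒥 × (Fin n → ℰ) =>
              (t.1, t.2, (fun j : Fin 0 => j.elim0 : Fin 0 → 𝒳)))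
                ((J1 ω, fun i => Es i ω)))) := by
        funext ω
        exact congrArg (fun v : Fin 0 → 𝒳 => (J1 ω, (fun i => Es i ω), v))
          (funext fun j => j.elim0)
      have e2 : Hd p (fun ω => (J1 ω, (fun i => Es i ω),
            fun j : Fin 0 => Xs ⟨j.val, lt_of_lt_of_le j.isLt hk⟩ ω))
          = Hd p (fun ω => (J1 ω, fun i => Es i ω)) := by
        rw [e]
        exact Hd_comp (fun t : 𝒥 × (Fin n → ℰ) =>
            (t.1, t.2, (fun j : Fin 0 => j.elim0 : Fin 0 → 𝒳)))
          (fun t t' h => by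
            simp only [Prod.mk.injEq] at h
            exact Prod.ext_iff.2 ⟨h.1, h.2.1⟩)
          (fun ω => (J1 ω, fun i => Es i ω))
      rw [e2, sub_self,
        show Finset.univ.filter (fun i : Fin n => i.val < 0) = ∅ from
          Finset.filter_false_of_mem fun i _ => by omega,
        Finset.sum_empty]
    | succ k ih =>
      intro hk1
      have hk : k ≤ n := Nat.le_of_succ_le hk1
      have ihk := ih hk
      have hsnocinj : Function.Injective
          (fun t : 𝒳 × (𝒥 × (Fin n → ℰ) × (Fin k → 𝒳)) =>
            ((t.2.1, t.2.2.1, Fin.snoc t.2.2.2 t.1) : 𝒥 × (Fin n → ℰ) × (Fin (k+1) → 𝒳))) := by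
        intro t t' h
        simp only [Prod.mk.injEq] at h
        obtain ⟨h1, h2, h3⟩ := h
        have hx : t.1 = t'.1 := by
          have := congrFun h3 (Fin.last k)
          simpa [Fin.snoc_last] using this
        have hv : t.2.2.2 = t'.2.2.2 := funext fun (i : Fin k) => by
          have := congrFun h3 i.castSucc
          simpa [Fin.snoc_castSucc] using this
        exact Prod.ext_iff.2 ⟨hx, Prod.ext_iff.2 ⟨h1, Prod.ext_iff.2 ⟨h2, hv⟩⟩⟩
      have hsnocfun : (fun ω => (J1 ω, (fun i => Es i ω),
            fun j : Fin (k+1) => Xs ⟨j.val, lt_of_lt_of_le j.isLt hk1⟩ ω))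
          = (fun ω => ((fun t : 𝒳 × (𝒥 × (Fin n → ℰ) × (Fin k → 𝒳)) =>
              ((t.2.1, t.2.2.1, Fin.snoc t.2.2.2 t.1) : 𝒥 × (Fin n → ℰ) × (Fin (k+1) → 𝒳)))
                ((Xs ⟨k, hk1⟩ ω, (J1 ω, (fun i => Es i ω),
                  fun j : Fin k => Xs ⟨j.val, lt_of_lt_of_le j.isLt hk⟩ ω))))) := by
        funext ω
        refine congrArg (fun v : Fin (k+1) → 𝒳 => (J1 ω, (fun i => Es i ω), v)) ?_
        funext j
        refine Fin.lastCases ?_ ?_ j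
        · simp
        · intro i
          simp
      have hsnoc : Hd p (fun ω => (J1 ω, (fun i => Es i ω),
            fun j : Fin (k+1) => Xs ⟨j.val, lt_of_lt_of_le j.isLt hk1⟩ ω))
          = Hd p (fun ω => (Xs ⟨k, hk1⟩ ω, (J1 ω, (fun i => Es i ω),
              fun j : Fin k => Xs ⟨j.val, lt_of_lt_of_le j.isLt hk⟩ ω))) := by
        rw [hsnocfun]
        exact Hd_comp (fun t : 𝒳 × (𝒥 × (Fin n → ℰ) × (Fin k → 𝒳)) =>
            ((t.2.1, t.2.2.1, Fin.snoc t.2.2.2 t.1) : 𝒥 × (Fin n → ℰ) × (Fin (k+1) → 𝒳)))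
          hsnocinj
          (fun ω => (Xs ⟨k, hk1⟩ ω, (J1 ω, (fun i => Es i ω),
            fun j : Fin k => Xs ⟨j.val, lt_of_lt_of_le j.isLt hk⟩ ω)))
      have hc : Hd p (fun ω => (Xs ⟨k, hk1⟩ ω, (J1 ω, (fun i => Es i ω),
              fun j : Fin k => Xs ⟨j.val, lt_of_lt_of_le j.isLt hk⟩ ω)))
            - Hd p (fun ω => (J1 ω, (fun i => Es i ω),
              fun j : Fin k => Xs ⟨j.val, lt_of_lt_of_le j.isLt hk⟩ ω))
          ≤ Hd p (fun ω => (Xs ⟨k, hk1⟩ ω, Es ⟨k, hk1⟩ ω, J1 ω,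
              fun j : Fin k => Xs ⟨j.val, lt_of_lt_of_le j.isLt hk⟩ ω))
            - Hd p (fun ω => (Es ⟨k, hk1⟩ ω, J1 ω,
              fun j : Fin k => Xs ⟨j.val, lt_of_lt_of_le j.isLt hk⟩ ω)) :=
        cond_mono hp hp1 (Xs ⟨k, hk1⟩)
          (fun ω => (J1 ω, (fun i => Es i ω),
            fun j : Fin k => Xs ⟨j.val, lt_of_lt_of_le j.isLt hk⟩ ω))
          (fun t => (t.2.1 ⟨k, hk1⟩, t.1, t.2.2))
      have hfilter : Finset.univ.filter (fun i : Fin n => i.val < k+1)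
          = insert (⟨k, hk1⟩ : Fin n)
              (Finset.univ.filter fun i : Fin n => i.val < k) := by
        ext i
        simp only [Finset.mem_filter, Finset.mem_insert, Finset.mem_univ, true_and,
          Fin.ext_iff]
        omega
      have hnotmem : (⟨k, hk1⟩ : Fin n) ∉
          Finset.univ.filter (fun i : Fin n => i.val < k) := by simp
      rw [hfilter, Finset.sum_insert hnotmem]
      have final_eq : CHd p (Xs ⟨k, hk1⟩)
            (fun ω => (J1 ω, fun j : Fin (⟨k, hk1⟩ : Fin n).val =>
              Xs ⟨j.val, j.isLt.trans (⟨k, hk1⟩ : Fin n).isLt⟩ ω))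
          - CMId p (Xs ⟨k, hk1⟩) (Es ⟨k, hk1⟩)
            (fun ω => (J1 ω, fun j : Fin (⟨k, hk1⟩ : Fin n).val =>
              Xs ⟨j.val, j.isLt.trans (⟨k, hk1⟩ : Fin n).isLt⟩ ω))
          = Hd p (fun ω => (Xs ⟨k, hk1⟩ ω, Es ⟨k, hk1⟩ ω, J1 ω,
              fun j : Fin k => Xs ⟨j.val, lt_of_lt_of_le j.isLt hk⟩ ω))
            - Hd p (fun ω => (Es ⟨k, hk1⟩ ω, J1 ω,
              fun j : Fin k => Xs ⟨j.val, lt_of_lt_of_le j.isLt hk⟩ ω)) := by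
        rw [CHd, CMId]
        ring
      linarith [hsnoc, hc, ihk, final_eq]
  have h' := tele n (le_refl n)
  rw [Finset.filter_true_of_mem (fun i (_ : i ∈ Finset.univ) => i.isLt)] at h'
  have bridge : Hd p (fun ω => (J1 ω, (fun i => Es i ω),
        fun j : Fin n => Xs ⟨j.val, lt_of_lt_of_le j.isLt (le_refl n)⟩ ω))
      = Hd p (fun ω => (J1 ω, (fun i => Es i ω), fun i => Xs i ω)) := rfl
  have s1 : Hd p (fun ω => ((fun i => Xs i ω : Fin n → 𝒳), J1 ω))
      = Hd p (fun ω => (J1 ω, (fun i => Xs i ω : Fin n → 𝒳))) :=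
    Eq.symm <| Hd_comp (fun t : (Fin n → 𝒳) × 𝒥 => (t.2, t.1))
      (fun t t' h => by
        simp only [Prod.mk.injEq] at h
        exact Prod.ext_iff.2 ⟨h.2, h.1⟩)
      (fun ω => ((fun i => Xs i ω : Fin n → 𝒳), J1 ω))
  have s2 : Hd p (fun ω => ((fun i => Xs i ω : Fin n → 𝒳), (fun i => Es i ω : Fin n → ℰ)))
      = Hd p (fun ω => ((fun i => Es i ω : Fin n → ℰ), (fun i => Xs i ω : Fin n → 𝒳))) :=
    Eq.symm <| Hd_comp (fun t : (Fin n → 𝒳) × (Fin n → ℰ) => (t.2, t.1))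
      (fun t t' h => by
        simp only [Prod.mk.injEq] at h
        exact Prod.ext_iff.2 ⟨h.2, h.1⟩)
      (fun ω => ((fun i => Xs i ω : Fin n → 𝒳), (fun i => Es i ω : Fin n → ℰ)))
  simp only [CHd, MId, CMId] at h' hMarkov ⊢
  linarith [h', s1, s2, hMarkov, bridge]
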